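/- For all k ∈ ℕ and x ∈ ℝ: (−1)^k · exp(x²/2) · (d^k/dx^k) exp(−x²/2) = 2^{−k/2} · H_k(x/√2), where H_k is the k-th (physicists') Hermite polynomial defined by H_0(x) = 1, H_1(x) = 2x, and H_{k+1}(x) = 2x·H_k(x) − 2k·H_{k−1}(x). -/

import Mathlib

open Real

/-- The physicists' Hermite polynomials, as real functions:
`H 0 = 1`, `H 1 x = 2 x`, `H (k+2) x = 2 x * H (k+1) x - 2 (k+1) * H k x`. -/
noncomputable def physHermite : ℕ → ℝ → ℝ
  | 0 => fun _ => 1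
  | 1 => fun x => 2 * x
  | (k + 2) => fun x => 2 * x * physHermite (k + 1) x - 2 * (k + 1) * physHermite k x

lemma physHermite_rec (k : ℕ) (x : ℝ) :
    physHermite (k + 1) x = 2 * x * physHermite k x - 2 * k * physHermite (k - 1) x := by
  match k with
  | 0 => simp [physHermite]
  | m + 1 => simp only [physHermite, Nat.add_sub_cancel]; push_cast; ring

lemma physHermite_hasDerivAt : ∀ k x, HasDerivAt (physHermite k)
    (2 * k * physHermite (k - 1) x) x := by
  intro k
  induction k using Nat.strong_induction_on with
  | _ k ih =>
    match k with
    | 0 => intro x; simpa [physHermite] using (hasDerivAt_const x (1:ℝ))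
    | 1 =>
      intro x
      have : HasDerivAt (fun x : ℝ => 2 * x) 2 x := by
        simpa using (hasDerivAt_id x).const_mul 2
      simpa [physHermite] using this
    | (k + 2) =>
      intro x
      have h1 : HasDerivAt (physHermite (k+1)) (2 * ((k:ℝ)+1) * physHermite k x) x := by
        have := ih (k + 1) (by omega) x
        simpa using this
      have h0 := ih k (by omega) x
      have hx : HasDerivAt (fun y : ℝ => 2 * y * physHermite (k+1) y)
          (2 * physHermite (k+1) x + 2 * x * (2 * ((k:ℝ)+1) * physHermite k x)) x := by
        have := ((hasDerivAt_id x).const_mul 2).mul h1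
        refine this.congr_deriv ?_
        simp only [id_eq]
        ring
      have hy : HasDerivAt (fun y : ℝ => 2 * ((k:ℝ)+1) * physHermite k y)
          (2 * ((k:ℝ)+1) * (2 * k * physHermite (k-1) x)) x := by
        simpa using h0.const_mul (2 * ((k:ℝ)+1))
      have hsub := hx.sub hy
      have heq : (fun y : ℝ => 2 * y * physHermite (k+1) y - 2 * ((k:ℝ)+1) * physHermite k y)
          = physHermite (k + 2) := by
        funext y; simp [physHermite]
      rw [show ((fun y : ℝ => 2 * y * physHermite (k+1) y) - fun y : ℝ => 2 * ((k:ℝ)+1) * physHermite k y) = physHermite (k + 2) from heq] at hsub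
      refine hsub.congr_deriv ?_
      have hrec := physHermite_rec k x
      push_cast
      linear_combination (-(2 * (k:ℝ) + 2)) * hrec

/-- Rodrigues-type formula relating derivatives of the Gaussian to the
physicists' Hermite polynomials:
`(-1)^k · exp(x²/2) · (d^k/dx^k) exp(-x²/2) = 2^(-k/2) · H_k(x/√2)`. -/
theorem gaussian_iteratedDeriv_eq_physHermite (k : ℕ) (x : ℝ) :
    (-1 : ℝ) ^ k * Real.exp (x ^ 2 / 2) *
        iteratedDeriv k (fun y : ℝ => Real.exp (-(y ^ 2) / 2)) x =
      (2 : ℝ) ^ (-(k : ℝ) / 2) * physHermite k (x / Real.sqrt 2) := by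
  have hs0 : Real.sqrt 2 ≠ 0 := by positivity
  have hs : Real.sqrt 2 * Real.sqrt 2 = 2 := Real.mul_self_sqrt (by norm_num)
  have key : ∀ k x, iteratedDeriv k (fun y : ℝ => Real.exp (-(y ^ 2) / 2)) x
      = (-1 : ℝ) ^ k * (2 : ℝ) ^ (-(k : ℝ) / 2) * physHermite k (x / Real.sqrt 2)
        * Real.exp (-(x ^ 2) / 2) := by
    intro k
    induction k with
    | zero => intro x; simp [physHermite]
    | succ k ih =>
      intro x
      rw [iteratedDeriv_succ]
      have hder : HasDerivAt (fun z : ℝ => iteratedDeriv k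
          (fun y : ℝ => Real.exp (-(y ^ 2) / 2)) z)
          ((-1 : ℝ) ^ k * (2 : ℝ) ^ (-(k : ℝ) / 2) *
            ((2 * k * physHermite (k-1) (x / Real.sqrt 2)) * (1 / Real.sqrt 2)
              * Real.exp (-(x ^ 2) / 2)
             + physHermite k (x / Real.sqrt 2) * (Real.exp (-(x ^ 2) / 2) * (-x)))) x := by
        have hH : HasDerivAt (fun z : ℝ => physHermite k (z / Real.sqrt 2))
            ((2 * k * physHermite (k-1) (x / Real.sqrt 2)) * (1 / Real.sqrt 2)) x := by
          have := (physHermite_hasDerivAt k (x / Real.sqrt 2)).comp x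
            ((hasDerivAt_id x).div_const (Real.sqrt 2))
          simpa [Function.comp_def] using this
        have hE : HasDerivAt (fun z : ℝ => Real.exp (-(z ^ 2) / 2))
            (Real.exp (-(x ^ 2) / 2) * (-x)) x := by
          have hin : HasDerivAt (fun z : ℝ => -(z ^ 2) / 2) (-x) x := by
            have := ((hasDerivAt_pow 2 x).neg).div_const 2
            refine this.congr_deriv ?_
            push_cast; ring
          simpa [mul_comm] using hin.exp
        have := (hH.mul hE).const_mul ((-1 : ℝ) ^ k * (2 : ℝ) ^ (-(k : ℝ) / 2))
        apply this.congr_of_eventuallyEq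
        filter_upwards with z
        rw [ih z, Pi.mul_apply]; ring
      rw [hder.deriv, physHermite_rec]
      have hAB : (2 : ℝ) ^ (-(k : ℝ) / 2)
          = (2 : ℝ) ^ (-((k : ℝ) + 1) / 2) * Real.sqrt 2 := by
        rw [Real.sqrt_eq_rpow, ← Real.rpow_add (by norm_num)]
        congr 1
        ring
      push_cast
      rw [hAB]
      field_simp
      ring_nf
      rw [Real.sq_sqrt (by norm_num : (0:ℝ) ≤ 2)]
      ring
  rw [key]
  have h1 : ((-1 : ℝ)) ^ k * (-1 : ℝ) ^ k = 1 := by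
    rw [← pow_add]
    exact Even.neg_one_pow ⟨k, rfl⟩
  have h2 : Real.exp (x ^ 2 / 2) * Real.exp (-(x ^ 2) / 2) = 1 := by
    rw [← Real.exp_add, show x ^ 2 / 2 + -(x ^ 2) / 2 = 0 by ring, Real.exp_zero]
  calc (-1 : ℝ) ^ k * Real.exp (x ^ 2 / 2) *
        ((-1 : ℝ) ^ k * (2 : ℝ) ^ (-(k : ℝ) / 2) * physHermite k (x / Real.sqrt 2)
          * Real.exp (-(x ^ 2) / 2))
      = ((-1 : ℝ) ^ k * (-1 : ℝ) ^ k) * (Real.exp (x ^ 2 / 2) * Real.exp (-(x ^ 2) / 2))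
        * ((2 : ℝ) ^ (-(k : ℝ) / 2) * physHermite k (x / Real.sqrt 2)) := by ring
    _ = (2 : ℝ) ^ (-(k : ℝ) / 2) * physHermite k (x / Real.sqrt 2) := by
        rw [h1, h2]; ring
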